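/- Let A ∈ ℝ^{m×n}, b ∈ ℝ^m, λ > 0, and let x̄ be a solution of the SR-LASSO with I := supp(x̄) such that the weak assumption holds at x̄, i.e.: (i) ker A_I = {0} and b ∉ range(A_I); (ii) there exists z ∈ ℝ^m with ⟨ȳ, z⟩ = 0 and A_Iᵀz = 0 such that ‖A_{I^C}ᵀ(ȳ + z)‖_∞ < λ, where ȳ := (b − Ax̄)/‖Ax̄ − b‖₂. Then x̄ is the unique solution of the SR-LASSO: every solution equals x̄. -/

import Mathlib

open Matrix Filter Topology
open scoped BigOperators Classical

noncomputable def l2 {k : ℕ} (x : Fin k → ℝ) : ℝ := Real.sqrt (∑ i, (x i) ^ 2)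

noncomputable def l1 {k : ℕ} (x : Fin k → ℝ) : ℝ := ∑ i, |x i|

noncomputable def linf {k : ℕ} (x : Fin k → ℝ) : ℝ := sSup (Set.range fun i => |x i|)

noncomputable def dotp {k : ℕ} (x y : Fin k → ℝ) : ℝ := ∑ i, x i * y i

noncomputable def pinv {m s : ℕ} (M : Matrix (Fin m) (Fin s) ℝ) :
    Matrix (Fin s) (Fin m) ℝ := (Mᵀ * M)⁻¹ * Mᵀ

/-- The SR-LASSO objective f_{A,b,λ}(x) := ‖Ax − b‖₂ + λ‖x‖₁. -/
noncomputable def srObj {m n : ℕ} (A : Matrix (Fin m) (Fin n) ℝ) (b : Fin m → ℝ)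
    (lam : ℝ) (x : Fin n → ℝ) : ℝ := l2 (A.mulVec x - b) + lam * l1 x

/-- x is a solution of the SR-LASSO with data (A, b, λ). -/
def IsSol {m n : ℕ} (A : Matrix (Fin m) (Fin n) ℝ) (b : Fin m → ℝ) (lam : ℝ)
    (x : Fin n → ℝ) : Prop := ∀ w : Fin n → ℝ, srObj A b lam x ≤ srObj A b lam w

/-- y is feasible for the SR-LASSO dual: ‖Aᵀy‖_∞ ≤ λ and ‖y‖₂ ≤ 1. -/
noncomputable def DualFeas {m n : ℕ} (A : Matrix (Fin m) (Fin n) ℝ) (lam : ℝ)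
    (y : Fin m → ℝ) : Prop := linf (Aᵀ.mulVec y) ≤ lam ∧ l2 y ≤ 1

/-- y is a solution of the SR-LASSO dual: it is feasible and maximizes ⟨b, ·⟩
over the feasible set. -/
noncomputable def IsDualSol {m n : ℕ} (A : Matrix (Fin m) (Fin n) ℝ) (b : Fin m → ℝ)
    (lam : ℝ) (y : Fin m → ℝ) : Prop :=
  DualFeas A lam y ∧ ∀ y' : Fin m → ℝ, DualFeas A lam y' → dotp b y' ≤ dotp b y

/-- uniqueness under the weak assumption: let x̄ solve the
SR-LASSO with I := supp(x̄) and suppose (i) ker A_I = {0} and b ∉ range A_I;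
(ii) there is z ⊥ ȳ with A_Iᵀz = 0 and ‖A_{I^C}ᵀ(ȳ + z)‖_∞ < λ, where
ȳ := (b − Ax̄)/‖Ax̄ − b‖₂. Then x̄ is the unique solution. -/
def srxToE {k : ℕ} (x : Fin k → ℝ) : EuclideanSpace ℝ (Fin k) := WithLp.toLp 2 x

lemma srx_l2_eq_norm {k : ℕ} (x : Fin k → ℝ) : l2 x = ‖srxToE x‖ := by
  rw [EuclideanSpace.norm_eq]
  simp [l2, srxToE, Real.norm_eq_abs, sq_abs]

lemma srx_dotp_eq_inner {k : ℕ} (x y : Fin k → ℝ) :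
    dotp x y = (inner ℝ (srxToE x) (srxToE y) : ℝ) := by
  simp [dotp, srxToE, PiLp.inner_apply, RCLike.inner_apply, mul_comm]

lemma srx_dotp_comm {k : ℕ} (x y : Fin k → ℝ) : dotp x y = dotp y x := by
  simp [dotp, mul_comm]

lemma srx_l2_nonneg {k : ℕ} (x : Fin k → ℝ) : 0 ≤ l2 x := Real.sqrt_nonneg _

lemma srx_cs {k : ℕ} (x y : Fin k → ℝ) : dotp x y ≤ l2 x * l2 y := by
  rw [srx_dotp_eq_inner, srx_l2_eq_norm, srx_l2_eq_norm]
  exact real_inner_le_norm _ _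

lemma srx_l2_smul {k : ℕ} (c : ℝ) (x : Fin k → ℝ) : l2 (c • x) = |c| * l2 x := by
  rw [srx_l2_eq_norm, srx_l2_eq_norm]
  have : srxToE (c • x) = c • srxToE x := rfl
  rw [this, norm_smul, Real.norm_eq_abs]

lemma srx_l2_neg {k : ℕ} (x : Fin k → ℝ) : l2 (-x) = l2 x := by
  have : (-x) = (-1 : ℝ) • x := by funext i; simp
  rw [this, srx_l2_smul]; simp

lemma srx_l2_eq_zero {k : ℕ} {x : Fin k → ℝ} (h : l2 x = 0) : x = 0 := by
  rw [srx_l2_eq_norm] at h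
  have h2 : srxToE x = 0 := norm_eq_zero.mp h
  have h3 := congrArg WithLp.ofLp h2
  simpa [srxToE] using h3

lemma srx_dotp_self {k : ℕ} (x : Fin k → ℝ) : dotp x x = l2 x ^ 2 := by
  rw [srx_dotp_eq_inner, srx_l2_eq_norm, real_inner_self_eq_norm_sq]

lemma srx_dotp_smul_right {k : ℕ} (c : ℝ) (x y : Fin k → ℝ) :
    dotp x (c • y) = c * dotp x y := by
  simp [dotp, Finset.mul_sum, mul_left_comm]

lemma srx_dotp_add_right {k : ℕ} (x y z : Fin k → ℝ) :
    dotp x (y + z) = dotp x y + dotp x z := by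
  simp [dotp, mul_add, Finset.sum_add_distrib]

lemma srx_l2_sq_expand {k : ℕ} (v w : Fin k → ℝ) (t : ℝ) :
    l2 (v + t • w) ^ 2 = l2 v ^ 2 + 2 * t * dotp v w + t ^ 2 * l2 w ^ 2 := by
  rw [srx_l2_eq_norm, srx_l2_eq_norm, srx_l2_eq_norm, srx_dotp_eq_inner]
  have : srxToE (v + t • w) = srxToE v + t • srxToE w := rfl
  rw [this, norm_add_sq_real, real_inner_smul_right, norm_smul]
  simp [Real.norm_eq_abs, mul_pow, sq_abs]
  ring

lemma srx_dir_lower {k : ℕ} (v w : Fin k → ℝ) (c ε : ℝ) (hε : 0 < ε) (hr : 0 < l2 v)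
    (h : ∀ t : ℝ, 0 < t → t < ε → l2 v + c * t ≤ l2 (v + t • w)) :
    c * l2 v ≤ dotp v w := by
  set r := l2 v with hrdef
  set d := dotp v w with hddef
  set W := l2 w ^ 2 with hWdef
  set ε' := min ε (r / (|c| + 1)) with hε'def
  have hε'pos : 0 < ε' := lt_min hε (div_pos hr (by positivity))
  have key : ∀ t : ℝ, t ∈ Set.Ioo 0 ε' → 2 * c * r ≤ 2 * d + t * W - c ^ 2 * t := by
    intro t ht
    obtain ⟨ht0, htε'⟩ := ht
    have htε : t < ε := lt_of_lt_of_le htε' (min_le_left _ _)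
    have htc : t * (|c| + 1) < r := by
      have := lt_of_lt_of_le htε' (min_le_right _ _)
      rw [lt_div_iff₀ (by positivity)] at this
      linarith
    have hpos : 0 ≤ r + c * t := by
      have h1 : -|c| * t ≤ c * t := mul_le_mul_of_nonneg_right (neg_abs_le c) ht0.le
      nlinarith [abs_nonneg c]
    have h1 := h t ht0 htε
    have h2 : (r + c * t) ^ 2 ≤ l2 (v + t • w) ^ 2 := by
      apply pow_le_pow_left₀ hpos h1
    rw [srx_l2_sq_expand] at h2
    rw [← hrdef, ← hddef, ← hWdef] at h2
    nlinarith
  have lim : Tendsto (fun t : ℝ => 2 * d + t * W - c ^ 2 * t) (𝓝[>] 0) (𝓝 (2 * d)) := by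
    have hc : Continuous fun t : ℝ => 2 * d + t * W - c ^ 2 * t := by continuity
    have := hc.tendsto 0
    simp only [zero_mul, mul_zero, add_zero, sub_zero] at this
    exact this.mono_left nhdsWithin_le_nhds
  have ev : ∀ᶠ t in 𝓝[>] (0 : ℝ), 2 * c * r ≤ 2 * d + t * W - c ^ 2 * t := by
    filter_upwards [Ioo_mem_nhdsGT hε'pos] with t ht using key t ht
  have := ge_of_tendsto lim ev
  linarith

lemma srx_dotp_mulVec {m n : ℕ} (A : Matrix (Fin m) (Fin n) ℝ) (y : Fin m → ℝ)
    (u : Fin n → ℝ) :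
    dotp y (A.mulVec u) = ∑ i, u i * dotp (fun r => A r i) y := by
  simp only [dotp, Matrix.mulVec, dotProduct, Finset.mul_sum]
  rw [Finset.sum_comm]
  apply Finset.sum_congr rfl
  intro i _
  apply Finset.sum_congr rfl
  intro j _
  ring

lemma srx_dotp_neg_right {k : ℕ} (x y : Fin k → ℝ) : dotp x (-y) = -dotp x y := by
  simp [dotp, mul_neg, Finset.sum_neg_distrib]

theorem stmt_8 {m n : ℕ} (A : Matrix (Fin m) (Fin n) ℝ) (b : Fin m → ℝ)
    (lam : ℝ) (hlam : 0 < lam) (xbar : Fin n → ℝ)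
    (hsol : IsSol A b lam xbar)
    (ybar : Fin m → ℝ)
    (hybar : ybar = (l2 (A.mulVec xbar - b))⁻¹ • (b - A.mulVec xbar))
    -- (i) ker A_I = {0}:
    (hker : ∀ u : Fin n → ℝ, (∀ i, xbar i = 0 → u i = 0) → A.mulVec u = 0 → u = 0)
    -- (i) b ∉ rge A_I:
    (hrge : ¬ ∃ u : Fin n → ℝ, (∀ i, xbar i = 0 → u i = 0) ∧ A.mulVec u = b)
    -- (ii):
    (hz : ∃ z : Fin m → ℝ, dotp ybar z = 0 ∧
        (∀ i, xbar i ≠ 0 → dotp (fun r => A r i) z = 0) ∧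
        (∀ i, xbar i = 0 → |dotp (fun r => A r i) (ybar + z)| < lam)) :
    ∀ x : Fin n → ℝ, IsSol A b lam x → x = xbar := by
  obtain ⟨z, hz1, hz2, hz3⟩ := hz
  intro x hx
  set v : Fin m → ℝ := A.mulVec xbar - b with hv
  set r : ℝ := l2 v with hrdef
  have hAxb : A.mulVec xbar ≠ b := by
    intro h
    exact hrge ⟨xbar, fun i hi => hi, h⟩
  have hvne : v ≠ 0 := by
    intro h
    rw [hv, sub_eq_zero] at h
    exact hAxb h
  have hr : 0 < r := by
    rcases lt_or_eq_of_le (srx_l2_nonneg v) with h | h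
    · exact h
    · exact absurd (srx_l2_eq_zero h.symm) hvne
  have hrne : r ≠ 0 := ne_of_gt hr
  have hbv : b - A.mulVec xbar = -v := by rw [hv, neg_sub]
  have hyb : ybar = r⁻¹ • (-v) := by rw [hybar, hbv]
  have hl2yb : l2 ybar = 1 := by
    rw [hyb, srx_l2_smul, srx_l2_neg, abs_of_pos (inv_pos.mpr hr), ← hrdef,
      inv_mul_cancel₀ hrne]
  have hryb : r • ybar = b - A.mulVec xbar := by
    rw [hyb, smul_smul, mul_inv_cancel₀ hrne, one_smul, hbv]
  -- directional optimality inequality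
  have hstep : ∀ (i : Fin n) (e t : ℝ), 0 < t →
      l2 v + lam * (|xbar i| - |xbar i + e * t|) ≤ l2 (v + t • (e • fun j => A j i)) := by
    intro i e t ht
    have hs := hsol (xbar + (t * e) • (Pi.single i 1 : Fin n → ℝ))
    have hsingle : A.mulVec ((Pi.single i 1 : Fin n → ℝ)) = fun j => A j i := by
      funext j
      simp [Matrix.mulVec, dotProduct, Pi.single_apply, mul_ite,
        Finset.sum_ite_eq']
    have hmv : A.mulVec (xbar + (t * e) • (Pi.single i 1 : Fin n → ℝ)) - b
        = v + t • (e • fun j => A j i) := by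
      rw [Matrix.mulVec_add, Matrix.mulVec_smul, hsingle, hv]
      funext j
      simp only [Pi.add_apply, Pi.sub_apply, Pi.smul_apply, smul_eq_mul]
      ring
    have hl1 : l1 (xbar + (t * e) • (Pi.single i 1 : Fin n → ℝ))
        = l1 xbar + (|xbar i + t * e| - |xbar i|) := by
      have hterm : ∀ j, |(xbar + (t * e) • (Pi.single i 1 : Fin n → ℝ)) j|
          = |xbar j| + (if j = i then |xbar i + t * e| - |xbar i| else 0) := by
        intro j
        by_cases hji : j = i
        · subst hji
          simp only [Pi.add_apply, Pi.smul_apply, Pi.single_eq_same, smul_eq_mul,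
            mul_one, if_pos rfl, if_true]
          ring
        · simp [Pi.single_apply, hji]
      simp only [l1]
      rw [Finset.sum_congr rfl (fun j _ => hterm j), Finset.sum_add_distrib,
        Finset.sum_ite_eq' Finset.univ i]
      simp [l1]
    simp only [srObj] at hs
    rw [hmv, hl1, ← hv] at hs
    have het : t * e = e * t := mul_comm _ _
    rw [het] at hs
    linarith
  -- |dotp v (col i)| ≤ lam * r for all i
  have habs : ∀ (e t : ℝ), e = 1 ∨ e = -1 → 0 < t → ∀ a : ℝ, |a + e * t| ≤ |a| + t := by
    intro e t he ht a
    calc |a + e * t| ≤ |a| + |e * t| := abs_add_le _ _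
      _ = |a| + t := by
          rcases he with h | h <;> rw [h] <;> simp [abs_of_pos ht]
  have hlow : ∀ (i : Fin n) (e : ℝ), e = 1 ∨ e = -1 →
      -lam * r ≤ e * dotp v (fun j => A j i) := by
    intro i e he
    have key := srx_dir_lower v (e • fun j => A j i) (-lam) 1 one_pos hr ?_
    · rwa [srx_dotp_smul_right] at key
    · intro t ht ht1
      have h1 := hstep i e t ht
      have h2 := habs e t he ht (xbar i)
      have h3 := mul_le_mul_of_nonneg_left h2 hlam.le
      nlinarith
  have hd_bound : ∀ i : Fin n, |dotp v (fun j => A j i)| ≤ lam * r := by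
    intro i
    have hp := hlow i 1 (Or.inl rfl)
    have hm := hlow i (-1) (Or.inr rfl)
    rw [one_mul] at hp
    rw [neg_one_mul] at hm
    rw [abs_le]
    constructor <;> linarith
  -- exact value on the support
  have hd_eq : ∀ i : Fin n, xbar i ≠ 0 → ∃ s : ℝ, s * xbar i = |xbar i| ∧
      dotp v (fun j => A j i) = -(lam * s * r) := by
    intro i hxi
    set s : ℝ := if 0 < xbar i then 1 else -1 with hsdef
    have hs : s * xbar i = |xbar i| := by
      rcases lt_trichotomy (xbar i) 0 with h | h | h
      · rw [hsdef, if_neg (by linarith), abs_of_neg h]; ring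
      · exact absurd h hxi
      · rw [hsdef, if_pos h, abs_of_pos h]; ring
    refine ⟨s, hs, ?_⟩
    have hxabs : 0 < |xbar i| := abs_pos.mpr hxi
    have habs2 : ∀ e : ℝ, e = 1 ∨ e = -1 → ∀ t : ℝ, 0 < t → t < |xbar i| →
        |xbar i + e * t| = |xbar i| + (e * s) * t := by
      intro e he t ht htb
      rcases lt_trichotomy (xbar i) 0 with h | h | h
      · have hsv : s = -1 := by rw [hsdef, if_neg (by linarith)]
        rw [abs_of_neg h] at htb ⊢
        rcases he with he | he <;> subst he <;> rw [hsv] <;>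
          rw [show |xbar i + _ * t| = -(xbar i + _ * t) from abs_of_neg (by linarith)] <;>
          ring
      · exact absurd h hxi
      · have hsv : s = 1 := by rw [hsdef, if_pos h]
        rw [abs_of_pos h] at htb ⊢
        rcases he with he | he <;> subst he <;> rw [hsv] <;>
          rw [show |xbar i + _ * t| = xbar i + _ * t from abs_of_pos (by linarith)] <;>
          ring
    have hlow2 : ∀ e : ℝ, e = 1 ∨ e = -1 →
        (-(lam * e * s)) * r ≤ e * dotp v (fun j => A j i) := by
      intro e he
      have key := srx_dir_lower v (e • fun j => A j i) (-(lam * e * s)) |xbar i| hxabs hr ?_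
      · rwa [srx_dotp_smul_right] at key
      · intro t ht htb
        have h1 := hstep i e t ht
        rw [habs2 e he t ht htb] at h1
        have : lam * (|xbar i| - (|xbar i| + e * s * t)) = -(lam * e * s) * t := by ring
        rw [this] at h1
        exact h1
    have hp := hlow2 1 (Or.inl rfl)
    have hm := hlow2 (-1) (Or.inr rfl)
    linarith [hp, hm]
  -- properties of G i := dotp (col i) ybar
  have hGdef : ∀ i : Fin n, dotp (fun j => A j i) ybar
      = -(r⁻¹ * dotp v (fun j => A j i)) := by
    intro i
    rw [hyb, srx_dotp_smul_right, srx_dotp_neg_right, srx_dotp_comm (fun j => A j i) v]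
    ring
  have hG1 : ∀ i : Fin n, |dotp (fun j => A j i) ybar| ≤ lam := by
    intro i
    rw [hGdef i, abs_neg, abs_mul, abs_inv, abs_of_pos hr]
    calc r⁻¹ * |dotp v fun j => A j i|
        ≤ r⁻¹ * (lam * r) := mul_le_mul_of_nonneg_left (hd_bound i) (inv_nonneg.mpr hr.le)
      _ = lam := by field_simp
  have hG2 : ∀ i : Fin n, dotp (fun j => A j i) ybar * xbar i = lam * |xbar i| := by
    intro i
    by_cases hxi : xbar i = 0
    · simp [hxi]
    · obtain ⟨s, hs, hdv⟩ := hd_eq i hxi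
      rw [hGdef i, hdv, ← hs]
      field_simp
  -- objective values agree
  have hF : l2 (A.mulVec x - b) + lam * l1 x = r + lam * l1 xbar := by
    have h1 := hsol x
    have h2 := hx xbar
    simp only [srObj] at h1 h2
    rw [← hv, ← hrdef] at h1 h2
    linarith
  have hsplit : b - A.mulVec x = (b - A.mulVec xbar) + A.mulVec (xbar - x) := by
    rw [Matrix.mulVec_sub]
    funext j
    simp only [Pi.add_apply, Pi.sub_apply]
    ring
  have hsum_xbar : ∑ i, xbar i * dotp (fun j => A j i) ybar = lam * l1 xbar := by
    simp only [l1]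
    rw [Finset.mul_sum]
    apply Finset.sum_congr rfl
    intro i _
    rw [mul_comm (xbar i), hG2 i]
  have hdyq : dotp ybar (b - A.mulVec x)
      = r + lam * l1 xbar - ∑ i, x i * dotp (fun j => A j i) ybar := by
    rw [hsplit, srx_dotp_add_right]
    have e1 : dotp ybar (b - A.mulVec xbar) = r := by
      rw [← hryb, srx_dotp_smul_right, srx_dotp_self, hl2yb]
      norm_num
    have e2 : dotp ybar (A.mulVec (xbar - x))
        = ∑ i, (xbar i - x i) * dotp (fun j => A j i) ybar := srx_dotp_mulVec A ybar _
    rw [e1, e2]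
    have e3 : ∑ i, (xbar i - x i) * dotp (fun j => A j i) ybar
        = (∑ i, xbar i * dotp (fun j => A j i) ybar)
          - ∑ i, x i * dotp (fun j => A j i) ybar := by
      rw [← Finset.sum_sub_distrib]
      apply Finset.sum_congr rfl
      intro i _
      ring
    rw [e3, hsum_xbar]
    ring
  have hl2negq : l2 (b - A.mulVec x) = l2 (A.mulVec x - b) := by
    rw [show b - A.mulVec x = -(A.mulVec x - b) from (neg_sub _ _).symm, srx_l2_neg]
  have hCS : dotp ybar (b - A.mulVec x) ≤ l2 (A.mulVec x - b) := by
    have h1 := srx_cs ybar (b - A.mulVec x)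
    rw [hl2yb, one_mul, hl2negq] at h1
    exact h1
  have hlb : lam * l1 x ≤ ∑ i, x i * dotp (fun j => A j i) ybar := by
    rw [hdyq] at hCS
    linarith [hF]
  have hub : ∀ i, x i * dotp (fun j => A j i) ybar ≤ lam * |x i| := by
    intro i
    calc x i * dotp (fun j => A j i) ybar
        ≤ |x i * dotp (fun j => A j i) ybar| := le_abs_self _
      _ = |x i| * |dotp (fun j => A j i) ybar| := abs_mul _ _
      _ ≤ |x i| * lam := mul_le_mul_of_nonneg_left (hG1 i) (abs_nonneg _)
      _ = lam * |x i| := mul_comm _ _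
  have hsum_ub : ∑ i, x i * dotp (fun j => A j i) ybar ≤ lam * l1 x := by
    simp only [l1]
    rw [Finset.mul_sum]
    exact Finset.sum_le_sum fun i _ => hub i
  have heq : ∑ i, x i * dotp (fun j => A j i) ybar = lam * l1 x :=
    le_antisymm hsum_ub hlb
  have h0 : ∑ i, (lam * |x i| - x i * dotp (fun j => A j i) ybar) = 0 := by
    rw [Finset.sum_sub_distrib, ← Finset.mul_sum]
    simp only [l1] at heq
    linarith [heq]
  have hxg : ∀ i, x i * dotp (fun j => A j i) ybar = lam * |x i| := by
    intro i
    have := (Finset.sum_eq_zero_iff_of_nonneg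
      (fun i _ => by linarith [hub i])).mp h0 i (Finset.mem_univ i)
    linarith
  -- equality in Cauchy-Schwarz gives collinearity
  have hceq : dotp ybar (b - A.mulVec x) = l2 (A.mulVec x - b) := by
    rw [hdyq, heq]
    linarith [hF]
  have hcol : b - A.mulVec x = l2 (A.mulVec x - b) • ybar := by
    have h1 : (inner ℝ (srxToE ybar) (srxToE (b - A.mulVec x)) : ℝ)
        = ‖srxToE ybar‖ * ‖srxToE (b - A.mulVec x)‖ := by
      rw [← srx_dotp_eq_inner, ← srx_l2_eq_norm, ← srx_l2_eq_norm, hl2yb, one_mul,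
        hl2negq, hceq]
    have h3 := inner_eq_norm_mul_iff_real.mp h1
    rw [← srx_l2_eq_norm, ← srx_l2_eq_norm, hl2yb, one_smul, hl2negq] at h3
    have h4 := congrArg WithLp.ofLp h3.symm
    simpa [srxToE] using h4
  -- z is orthogonal to b - Ax
  have hzq : ∑ i, x i * dotp (fun j => A j i) z = 0 := by
    have e1 : dotp z (b - A.mulVec x) = 0 := by
      rw [hcol, srx_dotp_smul_right, srx_dotp_comm z ybar, hz1, mul_zero]
    have e2 : dotp z (b - A.mulVec x)
        = ∑ i, (xbar i - x i) * dotp (fun j => A j i) z := by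
      rw [hsplit, srx_dotp_add_right, ← hryb, srx_dotp_smul_right,
        srx_dotp_comm z ybar, hz1, mul_zero, zero_add]
      exact srx_dotp_mulVec A z _
    have e3 : ∑ i, xbar i * dotp (fun j => A j i) z = 0 := by
      apply Finset.sum_eq_zero
      intro i _
      by_cases hxi : xbar i = 0
      · rw [hxi, zero_mul]
      · rw [hz2 i hxi, mul_zero]
    have e4 : ∑ i, (xbar i - x i) * dotp (fun j => A j i) z
        = (∑ i, xbar i * dotp (fun j => A j i) z)
          - ∑ i, x i * dotp (fun j => A j i) z := by
      rw [← Finset.sum_sub_distrib]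
      apply Finset.sum_congr rfl
      intro i _
      ring
    rw [e2, e4, e3] at e1
    linarith
  -- x vanishes off the support of xbar
  have hsupp : ∀ i, xbar i = 0 → x i = 0 := by
    have hT : ∑ i, (lam * |x i|
        - x i * (dotp (fun j => A j i) ybar + dotp (fun j => A j i) z)) = 0 := by
      have e5 : ∀ i : Fin n, lam * |x i|
          - x i * (dotp (fun j => A j i) ybar + dotp (fun j => A j i) z)
          = (lam * |x i| - x i * dotp (fun j => A j i) ybar)
            - x i * dotp (fun j => A j i) z := by
        intro i; ring
      rw [Finset.sum_congr rfl (fun i _ => e5 i), Finset.sum_sub_distrib, h0, hzq]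
      ring
    have hfnn : ∀ i, 0 ≤ lam * |x i|
        - x i * (dotp (fun j => A j i) ybar + dotp (fun j => A j i) z) := by
      intro i
      by_cases hxi : xbar i = 0
      · have hlt := hz3 i hxi
        rw [srx_dotp_add_right] at hlt
        have h1 : x i * (dotp (fun j => A j i) ybar + dotp (fun j => A j i) z)
            ≤ |x i| * |dotp (fun j => A j i) ybar + dotp (fun j => A j i) z| := by
          calc x i * (dotp (fun j => A j i) ybar + dotp (fun j => A j i) z)
              ≤ |x i * (dotp (fun j => A j i) ybar + dotp (fun j => A j i) z)| :=
                le_abs_self _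
            _ = _ := abs_mul _ _
        have h2 := mul_le_mul_of_nonneg_left hlt.le (abs_nonneg (x i))
        nlinarith [h1, h2]
      · rw [hz2 i hxi]
        simp only [add_zero]
        linarith [hxg i]
    intro i hxi
    by_contra hxne
    have hfi := (Finset.sum_eq_zero_iff_of_nonneg
      (fun i _ => hfnn i)).mp hT i (Finset.mem_univ i)
    have hlt := hz3 i hxi
    rw [srx_dotp_add_right] at hlt
    have h1 : x i * (dotp (fun j => A j i) ybar + dotp (fun j => A j i) z)
        ≤ |x i| * |dotp (fun j => A j i) ybar + dotp (fun j => A j i) z| := by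
      calc x i * (dotp (fun j => A j i) ybar + dotp (fun j => A j i) z)
          ≤ |x i * (dotp (fun j => A j i) ybar + dotp (fun j => A j i) z)| :=
            le_abs_self _
        _ = _ := abs_mul _ _
    have h2 : |x i| * |dotp (fun j => A j i) ybar + dotp (fun j => A j i) z|
        < |x i| * lam := mul_lt_mul_of_pos_left hlt (abs_pos.mpr hxne)
    nlinarith [hfi, h1, h2]
  -- conclude
  set cu := l2 (A.mulVec x - b) with hcu
  have hAdiff : A.mulVec (xbar - x) = (cu - r) • ybar := by
    have e1 : A.mulVec xbar - b = -(r • ybar) := by rw [hryb, neg_sub]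
    have e2 : A.mulVec x - b = -(cu • ybar) := by rw [← hcol, neg_sub]
    rw [Matrix.mulVec_sub]
    funext j
    have e1j := congrFun e1 j
    have e2j := congrFun e2 j
    simp only [Pi.sub_apply, Pi.neg_apply, Pi.smul_apply, smul_eq_mul] at e1j e2j ⊢
    linear_combination e1j - e2j
  by_cases hcur : cu = r
  · have hA0 : A.mulVec (xbar - x) = 0 := by
      rw [hAdiff, hcur, sub_self, zero_smul]
    have hd0 := hker (xbar - x) (fun i hi => by
      rw [Pi.sub_apply, hi, hsupp i hi, sub_zero]) hA0
    exact (sub_eq_zero.mp hd0).symm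
  · exfalso
    apply hrge
    refine ⟨xbar + (r / (cu - r)) • (xbar - x), fun i hi => ?_, ?_⟩
    · simp only [Pi.add_apply, Pi.smul_apply, Pi.sub_apply, smul_eq_mul, hi,
        hsupp i hi]
      ring
    · rw [Matrix.mulVec_add, Matrix.mulVec_smul, hAdiff, smul_smul,
        div_mul_cancel₀ _ (sub_ne_zero.mpr hcur), hryb]
      funext j
      simp only [Pi.add_apply, Pi.sub_apply]
      ring
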